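/- Let p, q ≥ 1 and let K_{p,q} be the complete bipartite graph with parts of sizes p and q. If p·q is even, then b^A_g(K_{p,q}) = 0 and b^I_g(K_{p,q}) = 0; if p·q is odd, then b^A_g(K_{p,q}) = 1 and b^I_g(K_{p,q}) = 1. -/

import Mathlib

open SimpleGraph

/-- The balance score of a state `(S0, S1)` in a graph `G`: the number of edges of `G` with
one endpoint in `S0` and the other in `S1`, minus the number of edges with both endpoints
in `S0` or both endpoints in `S1`. -/
noncomputable def bscore {V : Type*} (G : SimpleGraph V) (S0 S1 : Set V) : ℤ :=
  ({e ∈ G.edgeSet | ∃ u ∈ S0, ∃ v ∈ S1, e = s(u, v)}.ncard : ℤ) -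
  ({e ∈ G.edgeSet | (∃ u ∈ S0, ∃ v ∈ S0, e = s(u, v)) ∨
      (∃ u ∈ S1, ∃ v ∈ S1, e = s(u, v))}.ncard : ℤ)

/-- The value of the balance game computed by backward induction, with `k` moves remaining.
`t = true` means it is Admirable's (the minimizer's) turn, `t = false` means it is
Impish's (the maximizer's) turn.  `S0` is the set of vertices selected by Admirable so far,
`S1` the set selected by Impish. -/
noncomputable def gameVal {V : Type*} [Fintype V] (G : SimpleGraph V) :
    ℕ → Bool → Finset V → Finset V → ℤ
  | 0, _, S0, S1 => bscore G ↑S0 ↑S1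
  | (k + 1), t, S0, S1 =>
    letI := Classical.decEq V
    if h : (Finset.univ \ (S0 ∪ S1)).Nonempty then
      if t then (Finset.univ \ (S0 ∪ S1)).inf' h fun v => gameVal G k false (insert v S0) S1
      else (Finset.univ \ (S0 ∪ S1)).sup' h fun v => gameVal G k true S0 (insert v S1)
    else bscore G ↑S0 ↑S1

/-- The (A)-start game balance number `b^A_g(G)`. -/
noncomputable def balA {V : Type*} [Fintype V] (G : SimpleGraph V) : ℤ :=
  gameVal G (Fintype.card V) true ∅ ∅

/-- The (I)-start game balance number `b^I_g(G)`. -/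
noncomputable def balI {V : Type*} [Fintype V] (G : SimpleGraph V) : ℤ :=
  gameVal G (Fintype.card V) false ∅ ∅

/-- The value of the cordiality game computed by backward induction (final score is
`|bscore|`), with `k` moves remaining; `t = true` means it is Admirable's turn. -/
noncomputable def cordVal {V : Type*} [Fintype V] (G : SimpleGraph V) :
    ℕ → Bool → Finset V → Finset V → ℤ
  | 0, _, S0, S1 => |bscore G ↑S0 ↑S1|
  | (k + 1), t, S0, S1 =>
    letI := Classical.decEq V
    if h : (Finset.univ \ (S0 ∪ S1)).Nonempty then
      if t then (Finset.univ \ (S0 ∪ S1)).inf' h fun v => cordVal G k false (insert v S0) S1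
      else (Finset.univ \ (S0 ∪ S1)).sup' h fun v => cordVal G k true S0 (insert v S1)
    else |bscore G ↑S0 ↑S1|

/-- The (A)-start game cordiality number `c^A_g(G)`. -/
noncomputable def cordA {V : Type*} [Fintype V] (G : SimpleGraph V) : ℤ :=
  cordVal G (Fintype.card V) true ∅ ∅

/-- The (I)-start game cordiality number `c^I_g(G)`. -/
noncomputable def cordI {V : Type*} [Fintype V] (G : SimpleGraph V) : ℤ :=
  cordVal G (Fintype.card V) false ∅ ∅


section count
variable {α β : Type*}

lemma sym2_injOn :
    Set.InjOn (fun uv : (α ⊕ β) × (α ⊕ β) => s(uv.1, uv.2))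
      {uv | uv.1.isLeft = true ∧ uv.2.isRight = true} := by
  rintro ⟨u, v⟩ ⟨h1, h2⟩ ⟨u', v'⟩ ⟨h1', h2'⟩ h
  simp only [Sym2.eq_iff] at h
  rcases h with ⟨rfl, rfl⟩ | ⟨rfl, rfl⟩
  · rfl
  · rw [Sum.isLeft_iff] at h1; rw [Sum.isRight_iff] at h2'
    obtain ⟨y, rfl⟩ := h1
    obtain ⟨z, hz⟩ := h2'
    simp at hz

variable [DecidableEq (α ⊕ β)]

lemma count_pairs (A B C D : Finset (α ⊕ β)) (hA : ∀ w ∈ A, w.isLeft = true)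
    (hB : ∀ w ∈ B, w.isRight = true) (hC : ∀ w ∈ C, w.isLeft = true)
    (hD : ∀ w ∈ D, w.isRight = true) (hAC : Disjoint A C) :
    ((A ×ˢ B ∪ C ×ˢ D).image (fun uv => s(uv.1, uv.2))).card =
      A.card * B.card + C.card * D.card := by
  rw [Finset.card_image_of_injOn, Finset.card_union_of_disjoint, Finset.card_product,
    Finset.card_product]
  · rw [Finset.disjoint_left]
    rintro ⟨u, v⟩ h1 h2
    simp only [Finset.mem_product] at h1 h2
    exact (Finset.disjoint_left.mp hAC) h1.1 h2.1
  · apply sym2_injOn.mono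
    rintro ⟨u, v⟩ h
    simp only [Finset.coe_union, Finset.coe_product, Set.mem_union, Set.mem_prod,
      Finset.mem_coe] at h
    rcases h with ⟨h1, h2⟩ | ⟨h1, h2⟩
    · exact ⟨hA _ h1, hB _ h2⟩
    · exact ⟨hC _ h1, hD _ h2⟩

lemma cross_set_eq (S0 S1 : Finset (α ⊕ β)) :
    {e ∈ (completeBipartiteGraph α β).edgeSet |
        ∃ u ∈ (↑S0 : Set (α ⊕ β)), ∃ v ∈ (↑S1 : Set (α ⊕ β)), e = s(u, v)} =
      ↑(((S0.filter (fun v => v.isLeft)) ×ˢ (S1.filter (fun v => v.isRight)) ∪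
        (S1.filter (fun v => v.isLeft)) ×ˢ (S0.filter (fun v => v.isRight))).image
          (fun uv => s(uv.1, uv.2))) := by
  ext e
  simp only [Set.mem_setOf_eq, Finset.coe_image, Set.mem_image, Finset.mem_coe,
    Finset.mem_union, Finset.mem_product, Finset.mem_filter, mem_edgeSet]
  constructor
  · rintro ⟨he, u, hu, v, hv, rfl⟩
    rw [mem_edgeSet] at he
    simp only [completeBipartiteGraph_adj] at he
    rcases he with ⟨h1, h2⟩ | ⟨h1, h2⟩
    · exact ⟨(u, v), Or.inl ⟨⟨hu, h1⟩, hv, h2⟩, rfl⟩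
    · exact ⟨(v, u), Or.inr ⟨⟨hv, h2⟩, hu, h1⟩, Sym2.eq_swap⟩
  · rintro ⟨⟨u, v⟩, h, rfl⟩
    rcases h with ⟨⟨hu, h1⟩, hv, h2⟩ | ⟨⟨hu, h1⟩, hv, h2⟩
    · exact ⟨by rw [mem_edgeSet]; simp [h1, h2], u, hu, v, hv, rfl⟩
    · exact ⟨by rw [mem_edgeSet]; simp [h1, h2], v, hv, u, hu, Sym2.eq_swap.symm⟩

lemma same_set_eq (S0 S1 : Finset (α ⊕ β)) :
    {e ∈ (completeBipartiteGraph α β).edgeSet |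
        (∃ u ∈ (↑S0 : Set (α ⊕ β)), ∃ v ∈ (↑S0 : Set (α ⊕ β)), e = s(u, v)) ∨
        (∃ u ∈ (↑S1 : Set (α ⊕ β)), ∃ v ∈ (↑S1 : Set (α ⊕ β)), e = s(u, v))} =
      ↑(((S0.filter (fun v => v.isLeft)) ×ˢ (S0.filter (fun v => v.isRight)) ∪
        (S1.filter (fun v => v.isLeft)) ×ˢ (S1.filter (fun v => v.isRight))).image
          (fun uv => s(uv.1, uv.2))) := by
  ext e
  simp only [Set.mem_setOf_eq, Finset.coe_image, Set.mem_image, Finset.mem_coe,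
    Finset.mem_union, Finset.mem_product, Finset.mem_filter, mem_edgeSet]
  constructor
  · rintro ⟨he, h⟩
    rcases h with ⟨u, hu, v, hv, rfl⟩ | ⟨u, hu, v, hv, rfl⟩ <;>
      (rw [mem_edgeSet] at he
       simp only [completeBipartiteGraph_adj] at he) <;>
      rcases he with ⟨h1, h2⟩ | ⟨h1, h2⟩
    · exact ⟨(u, v), Or.inl ⟨⟨hu, h1⟩, hv, h2⟩, rfl⟩
    · exact ⟨(v, u), Or.inl ⟨⟨hv, h2⟩, hu, h1⟩, Sym2.eq_swap⟩
    · exact ⟨(u, v), Or.inr ⟨⟨hu, h1⟩, hv, h2⟩, rfl⟩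
    · exact ⟨(v, u), Or.inr ⟨⟨hv, h2⟩, hu, h1⟩, Sym2.eq_swap⟩
  · rintro ⟨⟨u, v⟩, h, rfl⟩
    rcases h with ⟨⟨hu, h1⟩, hv, h2⟩ | ⟨⟨hu, h1⟩, hv, h2⟩
    · exact ⟨by rw [mem_edgeSet]; simp [h1, h2], Or.inl ⟨u, hu, v, hv, rfl⟩⟩
    · exact ⟨by rw [mem_edgeSet]; simp [h1, h2], Or.inr ⟨u, hu, v, hv, rfl⟩⟩

lemma bscore_eq (S0 S1 : Finset (α ⊕ β)) (hd : Disjoint S0 S1) :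
    bscore (completeBipartiteGraph α β) ↑S0 ↑S1 =
      (((S0.filter (fun v => v.isLeft)).card : ℤ) - (S1.filter (fun v => v.isLeft)).card) *
      (((S1.filter (fun v => v.isRight)).card : ℤ) - (S0.filter (fun v => v.isRight)).card) := by
  rw [bscore, cross_set_eq, same_set_eq, Set.ncard_coe_finset, Set.ncard_coe_finset,
    count_pairs, count_pairs]
  · push_cast; ring
  all_goals
    first
    | (intro w hw; exact (Finset.mem_filter.mp hw).2)
    | (exact Finset.disjoint_filter_filter hd)
    | (exact Finset.disjoint_filter_filter hd.symm)
    | (exact Finset.disjoint_filter _)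

end count


def W (rX rY : ℕ) (x y : ℤ) (t : Bool) : ℤ :=
  if rX % 2 = 0 then
    if rY % 2 = 0 then x * y
    else if t then x * (y - 1) else x * (y + 1)
  else
    if rY % 2 = 0 then (if t then (x + 1) * y else (x - 1) * y)
    else if t then min ((x + 1) * (y + 1)) ((x - 1) * (y - 1))
         else max ((x + 1) * (y + 1)) ((x - 1) * (y - 1))

lemma WA_le_X (rX rY : ℕ) (x y : ℤ) (h : 1 ≤ rX) :
    W rX rY x y true ≤ W (rX - 1) rY (x + 1) y false := by
  rcases Nat.mod_two_eq_zero_or_one rX with h2 | h2 <;>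
    rcases Nat.mod_two_eq_zero_or_one rY with h3 | h3 <;>
    have h4 : (rX - 1) % 2 = 1 - rX % 2 := by omega
  all_goals simp only [W, h2, h3, h4, if_true, if_false, reduceIte]
  all_goals norm_num
  all_goals rcases le_total ((x + 1) * (y + 1)) ((x - 1) * (y - 1)) with h5 | h5 <;>
    simp [min_def, max_def] <;> split_ifs <;> nlinarith [h5]

lemma WA_le_Y (rX rY : ℕ) (x y : ℤ) (h : 1 ≤ rY) :
    W rX rY x y true ≤ W rX (rY - 1) x (y - 1) false := by
  rcases Nat.mod_two_eq_zero_or_one rX with h2 | h2 <;>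
    rcases Nat.mod_two_eq_zero_or_one rY with h3 | h3 <;>
    have h4 : (rY - 1) % 2 = 1 - rY % 2 := by omega
  all_goals simp only [W, h2, h3, h4, if_true, if_false, reduceIte]
  all_goals norm_num
  all_goals try ring_nf
  all_goals rcases le_total ((x + 1) * (y + 1)) ((x - 1) * (y - 1)) with h5 | h5 <;>
    simp [min_def, max_def] <;> split_ifs <;> nlinarith [h5]

lemma WA_attained (rX rY : ℕ) (x y : ℤ) (h : 1 ≤ rX + rY) :
    (1 ≤ rX ∧ W (rX - 1) rY (x + 1) y false ≤ W rX rY x y true) ∨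
    (1 ≤ rY ∧ W rX (rY - 1) x (y - 1) false ≤ W rX rY x y true) := by
  rcases Nat.mod_two_eq_zero_or_one rX with h2 | h2 <;>
    rcases Nat.mod_two_eq_zero_or_one rY with h3 | h3
  · -- both even: at least one ≥ 1
    rcases Nat.lt_or_ge rX 1 with hx | hx
    · right
      have h4 : (rY - 1) % 2 = 1 := by omega
      refine ⟨by omega, ?_⟩
      simp only [W, h2, h3, h4, if_true, if_false, reduceIte]
      norm_num
    · left
      have h4 : (rX - 1) % 2 = 1 := by omega
      refine ⟨hx, ?_⟩
      simp only [W, h2, h3, h4, if_true, if_false, reduceIte]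
      norm_num
  · right
    have h4 : (rY - 1) % 2 = 0 := by omega
    refine ⟨by omega, ?_⟩
    simp only [W, h2, h3, h4, if_true, if_false, reduceIte]
    norm_num
  · left
    have h4 : (rX - 1) % 2 = 0 := by omega
    refine ⟨by omega, ?_⟩
    simp only [W, h2, h3, h4, if_true, if_false, reduceIte]
    norm_num
  · rcases le_total ((x + 1) * (y + 1)) ((x - 1) * (y - 1)) with h5 | h5
    · left
      have h4 : (rX - 1) % 2 = 0 := by omega
      refine ⟨by omega, ?_⟩
      simp only [W, h2, h3, h4, if_true, if_false, reduceIte]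
      norm_num
      exact h5
    · right
      have h4 : (rY - 1) % 2 = 0 := by omega
      refine ⟨by omega, ?_⟩
      simp only [W, h2, h3, h4, if_true, if_false, reduceIte]
      norm_num
      exact h5

lemma WI_ge_X (rX rY : ℕ) (x y : ℤ) (h : 1 ≤ rX) :
    W (rX - 1) rY (x - 1) y true ≤ W rX rY x y false := by
  rcases Nat.mod_two_eq_zero_or_one rX with h2 | h2 <;>
    rcases Nat.mod_two_eq_zero_or_one rY with h3 | h3 <;>
    have h4 : (rX - 1) % 2 = 1 - rX % 2 := by omega
  all_goals simp only [W, h2, h3, h4, if_true, if_false, reduceIte]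
  all_goals norm_num
  all_goals rcases le_total ((x - 1 + 1) * (y + 1)) ((x - 1 - 1) * (y - 1)) with h5 | h5 <;>
    simp [min_def, max_def] <;> split_ifs <;> nlinarith [h5]

lemma WI_ge_Y (rX rY : ℕ) (x y : ℤ) (h : 1 ≤ rY) :
    W rX (rY - 1) x (y + 1) true ≤ W rX rY x y false := by
  rcases Nat.mod_two_eq_zero_or_one rX with h2 | h2 <;>
    rcases Nat.mod_two_eq_zero_or_one rY with h3 | h3 <;>
    have h4 : (rY - 1) % 2 = 1 - rY % 2 := by omega
  all_goals simp only [W, h2, h3, h4, if_true, if_false, reduceIte]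
  all_goals norm_num
  all_goals rcases le_total ((x + 1) * (y + 1 + 1)) ((x - 1) * (y + 1 - 1)) with h5 | h5 <;>
    simp [min_def, max_def] <;> split_ifs <;> nlinarith [h5]

lemma WI_attained (rX rY : ℕ) (x y : ℤ) (h : 1 ≤ rX + rY) :
    (1 ≤ rX ∧ W rX rY x y false ≤ W (rX - 1) rY (x - 1) y true) ∨
    (1 ≤ rY ∧ W rX rY x y false ≤ W rX (rY - 1) x (y + 1) true) := by
  rcases Nat.mod_two_eq_zero_or_one rX with h2 | h2 <;>
    rcases Nat.mod_two_eq_zero_or_one rY with h3 | h3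
  · rcases Nat.lt_or_ge rX 1 with hx | hx
    · right
      have h4 : (rY - 1) % 2 = 1 := by omega
      refine ⟨by omega, ?_⟩
      simp only [W, h2, h3, h4, if_true, if_false, reduceIte]
      norm_num
    · left
      have h4 : (rX - 1) % 2 = 1 := by omega
      refine ⟨hx, ?_⟩
      simp only [W, h2, h3, h4, if_true, if_false, reduceIte]
      norm_num
  · right
    have h4 : (rY - 1) % 2 = 0 := by omega
    refine ⟨by omega, ?_⟩
    simp only [W, h2, h3, h4, if_true, if_false, reduceIte]
    norm_num
  · left
    have h4 : (rX - 1) % 2 = 0 := by omega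
    refine ⟨by omega, ?_⟩
    simp only [W, h2, h3, h4, if_true, if_false, reduceIte]
    norm_num
  · rcases le_total ((x + 1) * (y + 1)) ((x - 1) * (y - 1)) with h5 | h5
    · left
      have h4 : (rX - 1) % 2 = 0 := by omega
      refine ⟨by omega, ?_⟩
      simp only [W, h2, h3, h4, if_true, if_false, reduceIte]
      norm_num
      exact h5
    · right
      have h4 : (rY - 1) % 2 = 0 := by omega
      refine ⟨by omega, ?_⟩
      simp only [W, h2, h3, h4, if_true, if_false, reduceIte]
      norm_num
      exact h5


section helpers
variable {α β : Type*}

lemma card_filter_left_univ [Fintype α] [Fintype β] :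
    ((Finset.univ : Finset (α ⊕ β)).filter (fun v => v.isLeft)).card = Fintype.card α := by
  have : ((Finset.univ : Finset (α ⊕ β)).filter (fun v => v.isLeft)) =
      Finset.univ.map ⟨Sum.inl, Sum.inl_injective⟩ := by
    ext v
    cases v <;> simp
  rw [this, Finset.card_map, Finset.card_univ]

lemma card_filter_right_univ [Fintype α] [Fintype β] :
    ((Finset.univ : Finset (α ⊕ β)).filter (fun v => v.isRight)).card = Fintype.card β := by
  have : ((Finset.univ : Finset (α ⊕ β)).filter (fun v => v.isRight)) =
      Finset.univ.map ⟨Sum.inr, Sum.inr_injective⟩ := by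
    ext v
    cases v <;> simp
  rw [this, Finset.card_map, Finset.card_univ]

variable [DecidableEq (α ⊕ β)]

lemma exists_unchosen_left [Fintype α] [Fintype β] (S0 S1 : Finset (α ⊕ β))
    (h : (S0.filter (fun v => v.isLeft)).card + (S1.filter (fun v => v.isLeft)).card
      < Fintype.card α) :
    ∃ v, v ∉ S0 ∧ v ∉ S1 ∧ v.isLeft = true := by
  by_contra hc
  push_neg at hc
  have hsub : (Finset.univ : Finset (α ⊕ β)).filter (fun v => v.isLeft) ⊆
      S0.filter (fun v => v.isLeft) ∪ S1.filter (fun v => v.isLeft) := by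
    intro v hv
    simp only [Finset.mem_filter, Finset.mem_univ, true_and] at hv
    by_cases h0 : v ∈ S0
    · exact Finset.mem_union_left _ (Finset.mem_filter.mpr ⟨h0, hv⟩)
    · by_cases h1 : v ∈ S1
      · exact Finset.mem_union_right _ (Finset.mem_filter.mpr ⟨h1, hv⟩)
      · exact absurd hv (hc v h0 h1)
  have := (Finset.card_le_card hsub).trans (Finset.card_union_le _ _)
  rw [card_filter_left_univ] at this
  omega

lemma exists_unchosen_right [Fintype α] [Fintype β] (S0 S1 : Finset (α ⊕ β))
    (h : (S0.filter (fun v => v.isRight)).card + (S1.filter (fun v => v.isRight)).card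
      < Fintype.card β) :
    ∃ v, v ∉ S0 ∧ v ∉ S1 ∧ v.isRight = true := by
  by_contra hc
  push_neg at hc
  have hsub : (Finset.univ : Finset (α ⊕ β)).filter (fun v => v.isRight) ⊆
      S0.filter (fun v => v.isRight) ∪ S1.filter (fun v => v.isRight) := by
    intro v hv
    simp only [Finset.mem_filter, Finset.mem_univ, true_and] at hv
    by_cases h0 : v ∈ S0
    · exact Finset.mem_union_left _ (Finset.mem_filter.mpr ⟨h0, hv⟩)
    · by_cases h1 : v ∈ S1
      · exact Finset.mem_union_right _ (Finset.mem_filter.mpr ⟨h1, hv⟩)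
      · exact absurd hv (hc v h0 h1)
  have := (Finset.card_le_card hsub).trans (Finset.card_union_le _ _)
  rw [card_filter_right_univ] at this
  omega

lemma lt_of_unchosen_left [Fintype α] [Fintype β] (S0 S1 : Finset (α ⊕ β))
    (hd : Disjoint S0 S1) (v : α ⊕ β) (hv0 : v ∉ S0) (hv1 : v ∉ S1) (hl : v.isLeft = true) :
    (S0.filter (fun w => w.isLeft)).card + (S1.filter (fun w => w.isLeft)).card
      < Fintype.card α := by
  have hsub : insert v (S0.filter (fun w => w.isLeft) ∪ S1.filter (fun w => w.isLeft)) ⊆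
      (Finset.univ : Finset (α ⊕ β)).filter (fun w => w.isLeft) := by
    intro w hw
    rcases Finset.mem_insert.mp hw with rfl | hw
    · simp [hl]
    · rcases Finset.mem_union.mp hw with hw | hw <;>
        simp [(Finset.mem_filter.mp hw).2]
  have hc := Finset.card_le_card hsub
  rw [card_filter_left_univ, Finset.card_insert_of_notMem, Finset.card_union_of_disjoint] at hc
  · omega
  · exact Finset.disjoint_filter_filter hd
  · simp only [Finset.mem_union, Finset.mem_filter, not_or]
    exact ⟨fun h => hv0 h.1, fun h => hv1 h.1⟩

lemma lt_of_unchosen_right [Fintype α] [Fintype β] (S0 S1 : Finset (α ⊕ β))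
    (hd : Disjoint S0 S1) (v : α ⊕ β) (hv0 : v ∉ S0) (hv1 : v ∉ S1) (hl : v.isRight = true) :
    (S0.filter (fun w => w.isRight)).card + (S1.filter (fun w => w.isRight)).card
      < Fintype.card β := by
  have hsub : insert v (S0.filter (fun w => w.isRight) ∪ S1.filter (fun w => w.isRight)) ⊆
      (Finset.univ : Finset (α ⊕ β)).filter (fun w => w.isRight) := by
    intro w hw
    rcases Finset.mem_insert.mp hw with rfl | hw
    · simp [hl]
    · rcases Finset.mem_union.mp hw with hw | hw <;>
        simp [(Finset.mem_filter.mp hw).2]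
  have hc := Finset.card_le_card hsub
  rw [card_filter_right_univ, Finset.card_insert_of_notMem, Finset.card_union_of_disjoint] at hc
  · omega
  · exact Finset.disjoint_filter_filter hd
  · simp only [Finset.mem_union, Finset.mem_filter, not_or]
    exact ⟨fun h => hv0 h.1, fun h => hv1 h.1⟩

lemma card_insert_left (v : α ⊕ β) (S : Finset (α ⊕ β)) (hv : v ∉ S) (hl : v.isLeft = true) :
    ((insert v S).filter (fun w => w.isLeft)).card = (S.filter (fun w => w.isLeft)).card + 1 ∧
    ((insert v S).filter (fun w => w.isRight)).card = (S.filter (fun w => w.isRight)).card := by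
  obtain ⟨a, rfl⟩ := Sum.isLeft_iff.mp hl
  constructor
  · rw [Finset.filter_insert, if_pos (by simp), Finset.card_insert_of_notMem
      (fun h => hv (Finset.mem_filter.mp h).1)]
  · rw [Finset.filter_insert, if_neg (by simp)]

lemma card_insert_right (v : α ⊕ β) (S : Finset (α ⊕ β)) (hv : v ∉ S) (hl : v.isRight = true) :
    ((insert v S).filter (fun w => w.isRight)).card = (S.filter (fun w => w.isRight)).card + 1 ∧
    ((insert v S).filter (fun w => w.isLeft)).card = (S.filter (fun w => w.isLeft)).card := by
  obtain ⟨a, rfl⟩ := Sum.isRight_iff.mp hl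
  constructor
  · rw [Finset.filter_insert, if_pos (by simp), Finset.card_insert_of_notMem
      (fun h => hv (Finset.mem_filter.mp h).1)]
  · rw [Finset.filter_insert, if_neg (by simp)]

end helpers


lemma gameVal_eq {α β : Type*} [Fintype α] [Fintype β] (k : ℕ) :
    ∀ (rX rY : ℕ) (t : Bool) (S0 S1 : Finset (α ⊕ β)),
      Disjoint S0 S1 →
      (S0.filter (fun v => v.isLeft)).card + (S1.filter (fun v => v.isLeft)).card + rX
        = Fintype.card α →
      (S0.filter (fun v => v.isRight)).card + (S1.filter (fun v => v.isRight)).card + rY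
        = Fintype.card β →
      k = rX + rY →
      gameVal (completeBipartiteGraph α β) k t S0 S1 =
        W rX rY
          (((S0.filter (fun v => v.isLeft)).card : ℤ)
            - ((S1.filter (fun v => v.isLeft)).card : ℤ))
          (((S1.filter (fun v => v.isRight)).card : ℤ)
            - ((S0.filter (fun v => v.isRight)).card : ℤ)) t := by
  induction k with
  | zero =>
    intro rX rY t S0 S1 hd hL hR hk
    letI := Classical.decEq (α ⊕ β)
    have h1 : rX = 0 := by omega
    have h2 : rY = 0 := by omega
    subst h1; subst h2
    rw [gameVal, bscore_eq S0 S1 hd]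
    simp [W]
  | succ k ih =>
    intro rX rY t S0 S1 hd hL hR hk
    letI := Classical.decEq (α ⊕ β)
    have hne : (Finset.univ \ (S0 ∪ S1)).Nonempty := by
      rcases (by omega : 1 ≤ rX ∨ 1 ≤ rY) with h | h
      · obtain ⟨v, hv0, hv1, -⟩ := exists_unchosen_left S0 S1 (by omega)
        exact ⟨v, by simp [hv0, hv1]⟩
      · obtain ⟨v, hv0, hv1, -⟩ := exists_unchosen_right S0 S1 (by omega)
        exact ⟨v, by simp [hv0, hv1]⟩
    rw [gameVal, dif_pos hne]
    cases t
    · -- Impish's turn : sup'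
      rw [if_neg Bool.false_ne_true]
      refine le_antisymm (Finset.sup'_le _ _ ?_) ?_
      · intro v hv
        rw [Finset.mem_sdiff, Finset.mem_union, not_or] at hv
        obtain ⟨-, hv0, hv1⟩ := hv
        by_cases hvl : v.isLeft = true
        · have hrX : 1 ≤ rX := by
            have := lt_of_unchosen_left S0 S1 hd v hv0 hv1 hvl
            omega
          obtain ⟨c1, c2⟩ := card_insert_left v S1 hv1 hvl
          rw [ih (rX - 1) rY true S0 (insert v S1)
            (Finset.disjoint_insert_right.mpr ⟨hv0, hd⟩)
            (by rw [c1]; omega) (by rw [c2]; omega) (by omega), c1, c2]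
          convert WI_ge_X rX rY
            (((S0.filter (fun v => v.isLeft)).card : ℤ)
              - ((S1.filter (fun v => v.isLeft)).card : ℤ))
            (((S1.filter (fun v => v.isRight)).card : ℤ)
              - ((S0.filter (fun v => v.isRight)).card : ℤ)) hrX using 2
          all_goals first | rfl | (push_cast; ring)
        · have hvr : v.isRight = true := by
            rcases v with a | a
            · simp at hvl
            · simp
          have hrY : 1 ≤ rY := by
            have := lt_of_unchosen_right S0 S1 hd v hv0 hv1 hvr
            omega
          obtain ⟨c1, c2⟩ := card_insert_right v S1 hv1 hvr
          rw [ih rX (rY - 1) true S0 (insert v S1)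
            (Finset.disjoint_insert_right.mpr ⟨hv0, hd⟩)
            (by rw [c2]; omega) (by rw [c1]; omega) (by omega), c1, c2]
          convert WI_ge_Y rX rY
            (((S0.filter (fun v => v.isLeft)).card : ℤ)
              - ((S1.filter (fun v => v.isLeft)).card : ℤ))
            (((S1.filter (fun v => v.isRight)).card : ℤ)
              - ((S0.filter (fun v => v.isRight)).card : ℤ)) hrY using 2
          all_goals first | rfl | (push_cast; ring)
      · rcases WI_attained rX rY
            (((S0.filter (fun v => v.isLeft)).card : ℤ)
              - ((S1.filter (fun v => v.isLeft)).card : ℤ))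
            (((S1.filter (fun v => v.isRight)).card : ℤ)
              - ((S0.filter (fun v => v.isRight)).card : ℤ)) (by omega)
          with ⟨h1, hle⟩ | ⟨h1, hle⟩
        · obtain ⟨v, hv0, hv1, hvl⟩ := exists_unchosen_left S0 S1 (by omega)
          have hvmem : v ∈ Finset.univ \ (S0 ∪ S1) := by simp [hv0, hv1]
          refine le_trans ?_ (Finset.le_sup' _ hvmem)
          obtain ⟨c1, c2⟩ := card_insert_left v S1 hv1 hvl
          rw [ih (rX - 1) rY true S0 (insert v S1)
            (Finset.disjoint_insert_right.mpr ⟨hv0, hd⟩)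
            (by rw [c1]; omega) (by rw [c2]; omega) (by omega), c1, c2]
          convert hle using 2
          all_goals first | rfl | (push_cast; ring)
        · obtain ⟨v, hv0, hv1, hvr⟩ := exists_unchosen_right S0 S1 (by omega)
          have hvmem : v ∈ Finset.univ \ (S0 ∪ S1) := by simp [hv0, hv1]
          refine le_trans ?_ (Finset.le_sup' _ hvmem)
          obtain ⟨c1, c2⟩ := card_insert_right v S1 hv1 hvr
          rw [ih rX (rY - 1) true S0 (insert v S1)
            (Finset.disjoint_insert_right.mpr ⟨hv0, hd⟩)
            (by rw [c2]; omega) (by rw [c1]; omega) (by omega), c1, c2]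
          convert hle using 2
          all_goals first | rfl | (push_cast; ring)
    · -- Admirable's turn : inf'
      rw [if_pos rfl]
      refine le_antisymm ?_ (Finset.le_inf' _ _ ?_)
      · rcases WA_attained rX rY
            (((S0.filter (fun v => v.isLeft)).card : ℤ)
              - ((S1.filter (fun v => v.isLeft)).card : ℤ))
            (((S1.filter (fun v => v.isRight)).card : ℤ)
              - ((S0.filter (fun v => v.isRight)).card : ℤ)) (by omega)
          with ⟨h1, hle⟩ | ⟨h1, hle⟩
        · obtain ⟨v, hv0, hv1, hvl⟩ := exists_unchosen_left S0 S1 (by omega)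
          have hvmem : v ∈ Finset.univ \ (S0 ∪ S1) := by simp [hv0, hv1]
          refine le_trans (Finset.inf'_le _ hvmem) ?_
          obtain ⟨c1, c2⟩ := card_insert_left v S0 hv0 hvl
          rw [ih (rX - 1) rY false (insert v S0) S1
            (Finset.disjoint_insert_left.mpr ⟨hv1, hd⟩)
            (by rw [c1]; omega) (by rw [c2]; omega) (by omega), c1, c2]
          convert hle using 2
          all_goals first | rfl | (push_cast; ring)
        · obtain ⟨v, hv0, hv1, hvr⟩ := exists_unchosen_right S0 S1 (by omega)
          have hvmem : v ∈ Finset.univ \ (S0 ∪ S1) := by simp [hv0, hv1]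
          refine le_trans (Finset.inf'_le _ hvmem) ?_
          obtain ⟨c1, c2⟩ := card_insert_right v S0 hv0 hvr
          rw [ih rX (rY - 1) false (insert v S0) S1
            (Finset.disjoint_insert_left.mpr ⟨hv1, hd⟩)
            (by rw [c2]; omega) (by rw [c1]; omega) (by omega), c1, c2]
          convert hle using 2
          all_goals first | rfl | (push_cast; ring)
      · intro v hv
        rw [Finset.mem_sdiff, Finset.mem_union, not_or] at hv
        obtain ⟨-, hv0, hv1⟩ := hv
        by_cases hvl : v.isLeft = true
        · have hrX : 1 ≤ rX := by
            have := lt_of_unchosen_left S0 S1 hd v hv0 hv1 hvl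
            omega
          obtain ⟨c1, c2⟩ := card_insert_left v S0 hv0 hvl
          rw [ih (rX - 1) rY false (insert v S0) S1
            (Finset.disjoint_insert_left.mpr ⟨hv1, hd⟩)
            (by rw [c1]; omega) (by rw [c2]; omega) (by omega), c1, c2]
          convert WA_le_X rX rY
            (((S0.filter (fun v => v.isLeft)).card : ℤ)
              - ((S1.filter (fun v => v.isLeft)).card : ℤ))
            (((S1.filter (fun v => v.isRight)).card : ℤ)
              - ((S0.filter (fun v => v.isRight)).card : ℤ)) hrX using 2
          all_goals first | rfl | (push_cast; ring)
        · have hvr : v.isRight = true := by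
            rcases v with a | a
            · simp at hvl
            · simp
          have hrY : 1 ≤ rY := by
            have := lt_of_unchosen_right S0 S1 hd v hv0 hv1 hvr
            omega
          obtain ⟨c1, c2⟩ := card_insert_right v S0 hv0 hvr
          rw [ih rX (rY - 1) false (insert v S0) S1
            (Finset.disjoint_insert_left.mpr ⟨hv1, hd⟩)
            (by rw [c2]; omega) (by rw [c1]; omega) (by omega), c1, c2]
          convert WA_le_Y rX rY
            (((S0.filter (fun v => v.isLeft)).card : ℤ)
              - ((S1.filter (fun v => v.isLeft)).card : ℤ))
            (((S1.filter (fun v => v.isRight)).card : ℤ)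
              - ((S0.filter (fun v => v.isRight)).card : ℤ)) hrY using 2
          all_goals first | rfl | (push_cast; ring)

theorem statement_12 (p q : ℕ) (hp : 1 ≤ p) (hq : 1 ≤ q) :
    (Even (p * q) →
      balA (completeBipartiteGraph (Fin p) (Fin q)) = 0 ∧
      balI (completeBipartiteGraph (Fin p) (Fin q)) = 0) ∧
    (Odd (p * q) →
      balA (completeBipartiteGraph (Fin p) (Fin q)) = 1 ∧
      balI (completeBipartiteGraph (Fin p) (Fin q)) = 1) := by
  have hcard : Fintype.card (Fin p ⊕ Fin q) = p + q := by simp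
  have key : ∀ t, gameVal (completeBipartiteGraph (Fin p) (Fin q)) (p + q) t ∅ ∅
      = W p q 0 0 t := by
    intro t
    have h := gameVal_eq (α := Fin p) (β := Fin q) (p + q) p q t ∅ ∅ (by simp) (by simp)
      (by simp) rfl
    simpa using h
  have hA : balA (completeBipartiteGraph (Fin p) (Fin q)) = W p q 0 0 true := by
    rw [balA, hcard, key]
  have hI : balI (completeBipartiteGraph (Fin p) (Fin q)) = W p q 0 0 false := by
    rw [balI, hcard, key]
  constructor
  · intro he
    rcases Nat.even_mul.mp he with he | he <;> have h2 := Nat.even_iff.mp he <;>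
      rw [hA, hI] <;> constructor <;> simp [W, h2] <;> split_ifs <;> ring
  · intro ho
    obtain ⟨hop, hoq⟩ := Nat.odd_mul.mp ho
    have hp2 := Nat.odd_iff.mp hop
    have hq2 := Nat.odd_iff.mp hoq
    rw [hA, hI]
    constructor <;> simp [W, hp2, hq2]
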